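/- Let q be an odd prime power, K a finite field with q² elements, F its subfield of order q, and f : K → K a planar function given by a Dembowski–Ostrom polynomial; set x*y := (f(x+y) − f(x) − f(y))/2 and ς_{u,v,w}(x,y) := (x+u, y + 2(w*x) − v). Let θ ∈ K \ {0} and let κ : K → K (written x ↦ x̄) be additive with κ∘κ = id, κ∘f = f∘κ, and exactly q elements y satisfying y + ȳ = f(x + x̄) for each x ∈ K. Set A_θ = {(x, tθ) : x ∈ K, t ∈ F} and U = {(x,y) ∈ K × K : y + ȳ = f(x + x̄)}. Then: (i) ς_{u,v,w} maps A_θ onto itself if and only if w = 0 and v ∈ θF, and the q³ maps ς_{u,v,0} with v ∈ θF form an abelian group under composition; (ii) ς_{u,v,w} maps U onto itself if and only if w = u + ū and f(u + ū) = −(v + v̄), and there are exactly q³ such triples' maps. -/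

import Mathlib

open Polynomial in
lemma stmt19_quad {K : Type} [CommRing K] (p : ℕ) [Fact p.Prime] [CharP K p] (i j : ℕ)
    (a x y : K) :
    (a + x + y) ^ (p ^ i + p ^ j) + a ^ (p ^ i + p ^ j) + x ^ (p ^ i + p ^ j)
      + y ^ (p ^ i + p ^ j)
    = (a + x) ^ (p ^ i + p ^ j) + (a + y) ^ (p ^ i + p ^ j) + (x + y) ^ (p ^ i + p ^ j) := by
  have e : ∀ (k : ℕ) (z w : K), (z + w) ^ p ^ k = z ^ p ^ k + w ^ p ^ k := fun k z w =>
    add_pow_char_pow z w p k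
  simp only [pow_add, e]
  ring

lemma stmt19_prodcount {K : Type} [Fintype K] (C : K → K → Prop) (m : ℕ)
    (h : ∀ u : K, {v : K | C u v}.ncard = m) :
    {P : K × K | C P.1 P.2}.ncard = Fintype.card K * m := by
  classical
  have hS : {P : K × K | C P.1 P.2} = ↑(Finset.univ.filter fun P : K × K => C P.1 P.2) := by
    simp
  rw [hS, Set.ncard_coe_finset,
    Finset.card_eq_sum_card_fiberwise (f := Prod.fst) (t := Finset.univ)
      (fun x _ => Finset.mem_univ _)]
  have hfib : ∀ u : K,
      ((Finset.univ.filter fun P : K × K => C P.1 P.2).filter fun P => P.1 = u).card = m := by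
    intro u
    have h2 : {v : K | C u v} = ↑(Finset.univ.filter fun v : K => C u v) := by simp
    have h3 := h u
    rw [h2, Set.ncard_coe_finset] at h3
    rw [← h3]
    apply Finset.card_bij (fun P _ => P.2)
    · intro P hP
      simp only [Finset.mem_filter, Finset.mem_univ, true_and] at hP ⊢
      rcases hP with ⟨h1, h2⟩
      rw [← h2]; exact h1
    · intro P hP Q hQ hPQ
      simp only [Finset.mem_filter, Finset.mem_univ, true_and] at hP hQ
      exact Prod.ext (hP.2.trans hQ.2.symm) hPQ
    · intro v hv
      simp only [Finset.mem_filter, Finset.mem_univ, true_and] at hv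
      exact ⟨(u, v), by simp [hv], rfl⟩
  simp only [hfib, Finset.sum_const, Finset.card_univ, smul_eq_mul]

open Polynomial in
lemma stmt19_Fcard {K : Type} [Field K] [Fintype K] (q : ℕ) (hq1 : 1 < q)
    (hcard : Fintype.card K = q ^ 2) : {t : K | t ^ q = t}.ncard = q := by
  classical
  have hq0 : 0 < q := by omega
  -- upper bound
  have hne : (X ^ q - X : K[X]) ≠ 0 := FiniteField.X_pow_card_sub_X_ne_zero K hq1
  have hupper : {t : K | t ^ q = t}.ncard ≤ q := by
    have hsub : {t : K | t ^ q = t} ⊆ ↑((X ^ q - X : K[X]).roots.toFinset) := by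
      intro t ht
      simp only [Set.mem_setOf_eq] at ht
      simp only [Finset.coe_sort_coe, Finset.mem_coe, Multiset.mem_toFinset, mem_roots hne,
        IsRoot.def, eval_sub, eval_pow, eval_X]
      rw [ht, sub_self]
    calc {t : K | t ^ q = t}.ncard ≤ ((X ^ q - X : K[X]).roots.toFinset : Set K).ncard :=
          Set.ncard_le_ncard hsub (Set.toFinite _)
      _ = (X ^ q - X : K[X]).roots.toFinset.card := Set.ncard_coe_finset _
      _ ≤ Multiset.card (X ^ q - X : K[X]).roots := Multiset.toFinset_card_le _
      _ ≤ (X ^ q - X : K[X]).natDegree := Polynomial.card_roots' _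
      _ = q := FiniteField.X_pow_card_sub_X_natDegree_eq K hq1
  -- lower bound
  obtain ⟨g, hg⟩ := IsCyclic.exists_generator (α := Kˣ)
  have hog : orderOf g = q ^ 2 - 1 := by
    rw [orderOf_eq_card_of_forall_mem_zpowers hg, Nat.card_eq_fintype_card,
      Fintype.card_units, hcard]
  have hfac : (q + 1) * (q - 1) = q ^ 2 - 1 := by
    obtain ⟨m, rfl⟩ : ∃ m, q = m + 1 := ⟨q - 1, by omega⟩
    have h1 : (m + 1) ^ 2 = m * m + 2 * m + 1 := by ring
    have h2 : (m + 1 + 1) * (m + 1 - 1) = m * m + 2 * m := by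
      simp only [Nat.add_sub_cancel]; ring
    omega
  have hoh : orderOf (g ^ (q + 1)) = q - 1 := by
    rw [orderOf_pow, hog, Nat.gcd_eq_right ⟨q - 1, hfac.symm⟩, ← hfac,
      Nat.mul_div_cancel_left _ (by omega)]
  have hlower : q ≤ {t : K | t ^ q = t}.ncard := by
    set T : Set K := (fun u : Kˣ => (u : K)) '' ((Subgroup.zpowers (g ^ (q + 1)) : Set Kˣ)) with hT
    have hTcard : T.ncard = q - 1 := by
      have hz := Nat.card_zpowers (g ^ (q + 1))
      rw [hoh] at hz
      rw [hT, Set.ncard_image_of_injective _ Units.val_injective, ← Nat.card_coe_set_eq]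
      exact hz
    have hTsub : insert (0 : K) T ⊆ {t : K | t ^ q = t} := by
      rintro z hz
      rcases Set.mem_insert_iff.mp hz with rfl | hz
      · simp [Set.mem_setOf_eq, zero_pow hq0.ne']
      · obtain ⟨u, hu, rfl⟩ := hz
        obtain ⟨k, hk⟩ := Subgroup.mem_zpowers_iff.mp hu
        have h1 : u ^ (q - 1) = 1 := by
          rw [← hk, ← zpow_natCast, ← zpow_mul, mul_comm, zpow_mul, zpow_natCast,
            ← hoh, pow_orderOf_eq_one, one_zpow]
        have h1' : (u : K) ^ (q - 1) = 1 := by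
          have := congrArg Units.val h1
          rwa [Units.val_pow_eq_pow_val, Units.val_one] at this
        show (u : K) ^ q = (u : K)
        calc (u : K) ^ q = (u : K) ^ (q - 1) * (u : K) := by
              rw [← pow_succ]; congr 1; omega
          _ = (u : K) := by rw [h1', one_mul]
    have h0T : (0 : K) ∉ T := by
      rintro ⟨u, _, hu⟩
      exact Units.ne_zero u hu
    calc q = T.ncard + 1 := by rw [hTcard]; omega
      _ = (insert (0:K) T).ncard := (Set.ncard_insert_of_notMem h0T (Set.toFinite _)).symm
      _ ≤ {t : K | t ^ q = t}.ncard := Set.ncard_le_ncard hTsub (Set.toFinite _)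
  omega


/-- The set `θF = {tθ : t ∈ F}`, where `F = {t : t^q = t}` is the subfield of order `q`. -/
def scalarSet (K : Type) [Field K] (q : ℕ) (θ : K) : Set K :=
  {c | ∃ t : K, t ^ q = t ∧ c = t * θ}

/-- proof of Theorem 4.4.  Let `f` be a planar Dembowski–Ostrom
polynomial on `K = F_{q²}`, `x*y = (f(x+y) − f(x) − f(y))/2`,
`ς_{u,v,w}(x,y) = (x+u, y + 2(w*x) − v)`, `θ ≠ 0`, and `κ` as in the unitary
polarity (additive, involutory, commuting with `f`, `q` solutions `y` of
`y + κ(y) = f(x + κ(x))` for each `x`).  With `A_θ = {(x,tθ) : x ∈ K, t ∈ F}` and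
`U = {(x,y) : y + κ(y) = f(x + κ(x))}`:
(i) `ς_{u,v,w}` maps `A_θ` onto itself iff `w = 0` and `v ∈ θF`; those `q³` maps
form an abelian group under composition;
(ii) `ς_{u,v,w}` maps `U` onto itself iff `w = u + κ(u)` and
`f(u + κ(u)) = −(v + κ(v))`; there are exactly `q³` such maps. -/
theorem stmt19 (p n q : ℕ) (hp : Nat.Prime p) (hpodd : Odd p) (hn : 0 < n) (hq : q = p ^ n)
    (K : Type) [Field K] [Fintype K] (hchar : CharP K p)
    (hcard : Fintype.card K = q ^ 2)
    (f : K → K)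
    (hplanar : ∀ a : K, a ≠ 0 → Function.Bijective (fun x : K => f (x + a) - f x))
    (hDO : ∃ (s : Finset (ℕ × ℕ)) (coef : ℕ × ℕ → K),
      ∀ x : K, f x = ∑ ij ∈ s, coef ij * x ^ (p ^ ij.1 + p ^ ij.2))
    (star : K → K → K)
    (hstar : ∀ x y : K, star x y = (f (x + y) - f x - f y) / 2)
    (ς : K → K → K → (K × K) → (K × K))
    (hς : ∀ u v w x y : K, ς u v w (x, y) = (x + u, y + 2 * star w x - v))
    (θ : K) (hθ : θ ≠ 0)
    (κ : K → K)
    (hadd : ∀ x y : K, κ (x + y) = κ x + κ y)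
    (hinv : ∀ x : K, κ (κ x) = x)
    (hcomm : ∀ x : K, κ (f x) = f (κ x))
    (hcount : ∀ x : K, {y : K | y + κ y = f (x + κ x)}.ncard = q) :
    (∀ u v w : K,
      ς u v w '' {P : K × K | ∃ x t : K, t ^ q = t ∧ P = (x, t * θ)}
          = {P : K × K | ∃ x t : K, t ^ q = t ∧ P = (x, t * θ)} ↔
        (w = 0 ∧ v ∈ scalarSet K q θ)) ∧
    {g : (K × K) → (K × K) | ∃ u v : K, v ∈ scalarSet K q θ ∧ g = ς u v 0}.ncard
      = q ^ 3 ∧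
    (∀ u v u' v' : K, v ∈ scalarSet K q θ → v' ∈ scalarSet K q θ →
      ς u v 0 ∘ ς u' v' 0 = ς u' v' 0 ∘ ς u v 0) ∧
    (∀ u v u' v' : K, v ∈ scalarSet K q θ → v' ∈ scalarSet K q θ →
      ∃ u'' v'' : K, v'' ∈ scalarSet K q θ ∧ ς u v 0 ∘ ς u' v' 0 = ς u'' v'' 0) ∧
    (∀ u v w : K,
      ς u v w '' {P : K × K | P.2 + κ P.2 = f (P.1 + κ P.1)}
          = {P : K × K | P.2 + κ P.2 = f (P.1 + κ P.1)} ↔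
        (w = u + κ u ∧ f (u + κ u) = -(v + κ v))) ∧
    {g : (K × K) → (K × K) |
      ∃ u v : K, f (u + κ u) = -(v + κ v) ∧ g = ς u v (u + κ u)}.ncard = q ^ 3 := by
  classical
  haveI : Fact p.Prime := ⟨hp⟩
  have hp2 : p ≠ 2 := by
    rintro rfl
    exact (Nat.not_odd_iff_even.mpr even_two) hpodd
  have hp3 : 3 ≤ p := by have := hp.two_le; omega
  have hq3 : 3 ≤ q := by
    rw [hq]
    calc 3 ≤ p := hp3
      _ = p ^ 1 := (pow_one p).symm
      _ ≤ p ^ n := Nat.pow_le_pow_right (by omega) hn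
  have hq0 : 0 < q := by omega
  have hqodd : Odd q := by rw [hq]; exact hpodd.pow
  have h2K : (2 : K) ≠ 0 := by
    intro h
    have h2 : ((2 : ℕ) : K) = 0 := by exact_mod_cast h
    have := (CharP.cast_eq_zero_iff K p 2).mp h2
    have := (Nat.prime_dvd_prime_iff_eq hp Nat.prime_two).mp this
    exact hp2 this
  obtain ⟨s, coef, hf⟩ := hDO
  have hf0 : f 0 = 0 := by
    rw [hf]
    apply Finset.sum_eq_zero
    intro ij _
    rw [zero_pow (by positivity), mul_zero]
  have hfq : ∀ a x y : K, f (a + x + y) + f a + f x + f y = f (a + x) + f (a + y) + f (x + y) := by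
    intro a x y
    simp only [hf, ← Finset.sum_add_distrib]
    apply Finset.sum_congr rfl
    intro ij _
    have h := stmt19_quad (K := K) p ij.1 ij.2 a x y
    linear_combination coef ij * h
  -- star basics
  have hs0r : ∀ w : K, star w 0 = 0 := by
    intro w; rw [hstar]; simp [hf0]
  have hs0l : ∀ x : K, star 0 x = 0 := by
    intro x; rw [hstar]; simp [hf0]
  have hsymm : ∀ x y : K, star x y = star y x := by
    intro x y; rw [hstar, hstar, add_comm]; ring
  have hsaddr : ∀ a x y : K, star a (x + y) = star a x + star a y := by
    intro a x y
    rw [hstar, hstar, hstar, show a + (x + y) = a + x + y from (add_assoc a x y).symm]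
    linear_combination (hfq a x y) / 2
  have hsaddl : ∀ a b x : K, star (a + b) x = star a x + star b x := by
    intro a b x; rw [hsymm, hsaddr, hsymm x, hsymm x]
  have hsnegr : ∀ a x : K, star a (-x) = - star a x := by
    intro a x
    have h1 := hsaddr a x (-x)
    rw [add_neg_cancel, hs0r] at h1
    linear_combination -h1
  have hssubr : ∀ a x y : K, star a (x - y) = star a x - star a y := by
    intro a x y; rw [sub_eq_add_neg, hsaddr, hsnegr, sub_eq_add_neg]
  have hssubl : ∀ a b x : K, star (a - b) x = star a x - star b x := by
    intro a b x; rw [hsymm, hssubr, hsymm x, hsymm x]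
  have hsbij : ∀ w : K, w ≠ 0 → Function.Bijective (fun x : K => star w x) := by
    intro w hw
    rw [← Finite.injective_iff_bijective]
    intro x y hxy
    simp only [hstar] at hxy
    apply (hplanar w hw).injective
    show f (x + w) - f x = f (y + w) - f y
    field_simp at hxy
    rw [show x + w = w + x from add_comm x w, show y + w = w + y from add_comm y w]
    linear_combination hxy
  have hfab : ∀ a b : K, f (a + b) = f a + f b + 2 * star a b := by
    intro a b; rw [hstar]; field_simp; ring
  -- kappa basics
  have hk0 : κ 0 = 0 := by
    have := hadd 0 0; simp at this; linear_combination this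
  have hkneg : ∀ x : K, κ (-x) = - κ x := by
    intro x
    have := hadd x (-x); rw [add_neg_cancel, hk0] at this
    linear_combination -this
  have hksub : ∀ x y : K, κ (x - y) = κ x - κ y := by
    intro x y; rw [sub_eq_add_neg, hadd, hkneg, sub_eq_add_neg]
  have hk2m : ∀ z : K, κ (2 * z) = 2 * κ z := by
    intro z
    have := hadd z z
    rw [show z + z = 2 * z by ring] at this
    linear_combination this
  have hk2 : ∀ z : K, κ (z / 2) = κ z / 2 := by
    intro z
    have h1 := hk2m (z / 2)
    rw [show 2 * (z / 2) = z by field_simp] at h1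
    field_simp
    linear_combination -h1
  have hkstar : ∀ a b : K, κ (star a b) = star (κ a) (κ b) := by
    intro a b
    rw [hstar, hstar, hk2, hksub, hksub, hcomm, hcomm, hcomm, hadd]
  have hknid : ¬ (∀ x : K, κ x = x) := by
    intro hid
    have h0 := hcount 0
    rw [hk0, add_zero, hf0] at h0
    have : {y : K | y + κ y = 0} = {0} := by
      ext y
      simp only [Set.mem_setOf_eq, Set.mem_singleton_iff, hid y]
      constructor
      · intro h
        have : 2 * y = 0 := by linear_combination h
        exact (mul_eq_zero.mp this).resolve_left h2K
      · rintro rfl; ring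
    rw [this, Set.ncard_singleton] at h0
    omega
  have hknnegid : ¬ (∀ x : K, κ x = -x) := by
    intro hid
    have h0 := hcount 0
    rw [hk0, add_zero, hf0] at h0
    have : {y : K | y + κ y = 0} = Set.univ := by
      ext y; simp [hid y]
    rw [this, Set.ncard_univ, Nat.card_eq_fintype_card, hcard] at h0
    nlinarith
  -- F basics
  have hFadd : ∀ {a b : K}, a ^ q = a → b ^ q = b → (a + b) ^ q = a + b := by
    intro a b ha hb
    rw [hq, add_pow_char_pow, ← hq, ha, hb]
  have hFneg : ∀ {a : K}, a ^ q = a → (-a) ^ q = -a := by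
    intro a ha; rw [hqodd.neg_pow, ha]
  have hFsub : ∀ {a b : K}, a ^ q = a → b ^ q = b → (a - b) ^ q = a - b := by
    intro a b ha hb
    rw [sub_eq_add_neg]; exact hFadd ha (hFneg hb)
  have hFcard : {t : K | t ^ q = t}.ncard = q := stmt19_Fcard q (by omega) hcard
  have hscard : (scalarSet K q θ).ncard = q := by
    have him : scalarSet K q θ = (fun t : K => t * θ) '' {t : K | t ^ q = t} := by
      ext c
      constructor
      · rintro ⟨t, ht, rfl⟩; exact ⟨t, ht, rfl⟩
      · rintro ⟨t, ht, rfl⟩; exact ⟨t, ht, rfl⟩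
    rw [him, Set.ncard_image_of_injective _ (mul_left_injective₀ hθ), hFcard]
  refine ⟨?_, ?_, ?_, ?_, ?_, ?_⟩
  · -- (i) the iff
    intro u v w
    constructor
    · intro him
      have hmem : ∀ x : K, ∃ t : K, t ^ q = t ∧ 2 * star w x - v = t * θ := by
        intro x
        have h1 : ((x, (0:K) * θ) : K × K)
            ∈ {P : K × K | ∃ x t : K, t ^ q = t ∧ P = (x, t * θ)} :=
          ⟨x, 0, by rw [zero_pow hq0.ne'], rfl⟩
        have h2 : ς u v w (x, (0:K) * θ)
            ∈ {P : K × K | ∃ x t : K, t ^ q = t ∧ P = (x, t * θ)} := by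
          rw [← him]; exact Set.mem_image_of_mem _ h1
        rw [hς] at h2
        obtain ⟨x', t, ht, heq⟩ := h2
        have h3 := congrArg Prod.snd heq
        exact ⟨t, ht, by linear_combination h3⟩
      have hv : v ∈ scalarSet K q θ := by
        obtain ⟨t, ht, h⟩ := hmem 0
        rw [hs0r, mul_zero, zero_sub] at h
        exact ⟨-t, hFneg ht, by linear_combination -h⟩
      refine ⟨?_, hv⟩
      by_contra hw
      have hall : ∀ z : K, ∃ t : K, t ^ q = t ∧ z = t * θ := by
        intro z
        obtain ⟨x, hx⟩ := (hsbij w hw).surjective ((z + v) / 2)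
        simp only at hx
        obtain ⟨t, ht, h⟩ := hmem x
        refine ⟨t, ht, ?_⟩
        rw [← h, hx]
        field_simp
        ring
      have hsub2 : (Set.univ : Set K) ⊆ (fun t : K => t * θ) '' {t : K | t ^ q = t} := by
        intro z _
        obtain ⟨t, ht, h⟩ := hall z
        exact ⟨t, ht, h.symm⟩
      have hle := Set.ncard_le_ncard hsub2 (Set.toFinite _)
      rw [Set.ncard_univ, Nat.card_eq_fintype_card, hcard,
        Set.ncard_image_of_injective _ (mul_left_injective₀ hθ), hFcard] at hle
      nlinarith
    · rintro ⟨rfl, hv⟩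
      obtain ⟨t₀, ht₀, rfl⟩ := hv
      ext P
      constructor
      · rintro ⟨⟨x, y⟩, ⟨x₁, t, ht, hPeq⟩, rfl⟩
        rw [Prod.mk.injEq] at hPeq
        obtain ⟨rfl, rfl⟩ := hPeq
        rw [hς, hs0l]
        refine ⟨x + u, t - t₀, hFsub ht ht₀, ?_⟩
        exact Prod.ext rfl (by ring)
      · rintro ⟨x₁, t, ht, rfl⟩
        refine ⟨(x₁ - u, (t + t₀) * θ), ⟨x₁ - u, t + t₀, hFadd ht ht₀, rfl⟩, ?_⟩
        rw [hς, hs0l]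
        simp only [Prod.mk.injEq]
        exact ⟨by ring, by ring⟩
  · -- (i) the count
    have hrep : {g : (K × K) → (K × K) | ∃ u v : K, v ∈ scalarSet K q θ ∧ g = ς u v 0}
        = (fun uv : K × K => ς uv.1 uv.2 0) '' {uv : K × K | uv.2 ∈ scalarSet K q θ} := by
      ext g
      constructor
      · rintro ⟨u, v, hv, rfl⟩; exact ⟨(u, v), hv, rfl⟩
      · rintro ⟨⟨u, v⟩, hv, rfl⟩; exact ⟨u, v, hv, rfl⟩
    have hinj : Function.Injective (fun uv : K × K => ς uv.1 uv.2 0) := by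
      rintro ⟨u, v⟩ ⟨u', v'⟩ h
      simp only at h
      have h0 := congrFun h ((0 : K), (0 : K))
      rw [hς, hς, hs0l] at h0
      simp only [Prod.mk.injEq] at h0
      obtain ⟨h1, h2⟩ := h0
      exact Prod.ext (by linear_combination h1) (by linear_combination -h2)
    have hc := stmt19_prodcount (fun _ v => v ∈ scalarSet K q θ) q
      (fun u => by rw [Set.setOf_mem_eq]; exact hscard)
    rw [hrep, Set.ncard_image_of_injective _ hinj]
    rw [show {uv : K × K | uv.2 ∈ scalarSet K q θ}
        = {P : K × K | (fun _ v => v ∈ scalarSet K q θ) P.1 P.2} from rfl, hc, hcard]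
    ring
  · -- commutativity
    intro u v u' v' _ _
    funext P
    obtain ⟨x, y⟩ := P
    simp only [Function.comp_apply, hς, hs0l, Prod.mk.injEq]
    exact ⟨by ring, by ring⟩
  · -- closure
    intro u v u' v' hv hv'
    obtain ⟨t, ht, rfl⟩ := hv
    obtain ⟨t', ht', rfl⟩ := hv'
    refine ⟨u + u', t * θ + t' * θ, ⟨t + t', hFadd ht ht', by ring⟩, ?_⟩
    funext P
    obtain ⟨x, y⟩ := P
    simp only [Function.comp_apply, hς, hs0l, Prod.mk.injEq]
    exact ⟨by ring, by ring⟩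
  · -- (ii) the iff
    intro u v w
    have hκm : κ (u + κ u) = u + κ u := by rw [hadd, hinv, add_comm]
    constructor
    · intro him
      have hex : ∀ x : K, ∃ y : K, y + κ y = f (x + κ x) := by
        intro x
        obtain ⟨y, hy⟩ := Set.nonempty_of_ncard_ne_zero
          (s := {y : K | y + κ y = f (x + κ x)}) (by rw [hcount]; omega)
        exact ⟨y, hy⟩
      have key : ∀ x : K, 2 * star w x + 2 * star (κ w) (κ x) - (v + κ v)
          = f (u + κ u) + 2 * (star (u + κ u) x + star (u + κ u) (κ x)) := by
        intro x
        obtain ⟨y, hy⟩ := hex x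
        have hmem : ς u v w (x, y) ∈ {P : K × K | P.2 + κ P.2 = f (P.1 + κ P.1)} := by
          rw [← him]
          exact Set.mem_image_of_mem _ (show (x, y) ∈ _ from hy)
        rw [hς] at hmem
        have h : (y + 2 * star w x - v) + κ (y + 2 * star w x - v)
            = f ((x + u) + κ (x + u)) := hmem
        have e1 : κ (y + 2 * star w x - v) = κ y + 2 * star (κ w) (κ x) - κ v := by
          rw [show y + 2 * star w x - v = y + (2 * star w x - v) by ring,
            hadd, hksub, hk2m, hkstar]
          ring
        have e2 : f ((x + u) + κ (x + u)) = f (x + κ x) + f (u + κ u)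
            + 2 * (star (u + κ u) x + star (u + κ u) (κ x)) := by
          rw [show (x + u) + κ (x + u) = (x + κ x) + (u + κ u) by rw [hadd]; ring,
            hfab, hsymm (x + κ x), hsaddr]
        rw [e1, e2] at h
        linear_combination h - hy
      have hfveq : f (u + κ u) = -(v + κ v) := by
        have h0 := key 0
        rw [hs0r, hk0, hs0r, hs0r] at h0
        linear_combination -h0
      have keyA : ∀ x : K, star w x + star (κ w) (κ x)
          = star (u + κ u) x + star (u + κ u) (κ x) := by
        intro x
        have h := key x
        rw [hfveq] at h
        apply mul_left_cancel₀ h2K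
        linear_combination h
      have hwfix : κ w = w := by
        by_contra hne
        have hc : w - κ w ≠ 0 := sub_ne_zero_of_ne fun h => hne h.symm
        have hid : ∀ x : K, κ x = x := by
          intro x
          have hA := keyA x
          have hB := keyA (κ x)
          rw [hinv] at hB
          have hz : star (w - κ w) (x - κ x) = 0 := by
            rw [hssubl, hssubr, hssubr]
            linear_combination hA - hB
          have h0 : star (w - κ w) (x - κ x) = star (w - κ w) 0 := by rw [hz, hs0r]
          have h1 : x - κ x = 0 := (hsbij _ hc).injective h0
          linear_combination -h1
        exact hknid hid
      refine ⟨?_, hfveq⟩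
      by_contra hne
      have hc : w - (u + κ u) ≠ 0 := sub_ne_zero_of_ne hne
      have hid : ∀ x : K, κ x = -x := by
        intro x
        have hA := keyA x
        rw [hwfix] at hA
        have hz : star (w - (u + κ u)) (x + κ x) = 0 := by
          rw [hssubl, hsaddr, hsaddr]
          linear_combination hA
        have h0 : star (w - (u + κ u)) (x + κ x) = star (w - (u + κ u)) 0 := by rw [hz, hs0r]
        have h1 : x + κ x = 0 := (hsbij _ hc).injective h0
        linear_combination h1
      exact hknnegid hid
    · rintro ⟨rfl, hfv⟩
      have hinj : Function.Injective (ς u v (u + κ u)) := by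
        rintro ⟨x, y⟩ ⟨a, b⟩ h
        rw [hς, hς] at h
        simp only [Prod.mk.injEq] at h
        obtain ⟨h1, h2⟩ := h
        have hx : x = a := by linear_combination h1
        subst hx
        exact Prod.ext rfl (by linear_combination h2)
      have hsubset : ς u v (u + κ u) '' {P : K × K | P.2 + κ P.2 = f (P.1 + κ P.1)}
          ⊆ {P : K × K | P.2 + κ P.2 = f (P.1 + κ P.1)} := by
        rintro _ ⟨⟨x, y⟩, hP, rfl⟩
        simp only [Set.mem_setOf_eq] at hP
        rw [hς]
        show (y + 2 * star (u + κ u) x - v) + κ (y + 2 * star (u + κ u) x - v)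
          = f ((x + u) + κ (x + u))
        have e1 : κ (y + 2 * star (u + κ u) x - v)
            = κ y + 2 * star (u + κ u) (κ x) - κ v := by
          rw [show y + 2 * star (u + κ u) x - v = y + (2 * star (u + κ u) x - v) by ring,
            hadd, hksub, hk2m, hkstar, hκm]
          ring
        have e2 : f ((x + u) + κ (x + u)) = f (x + κ x) + f (u + κ u)
            + 2 * (star (u + κ u) x + star (u + κ u) (κ x)) := by
          rw [show (x + u) + κ (x + u) = (x + κ x) + (u + κ u) by rw [hadd]; ring,
            hfab, hsymm (x + κ x), hsaddr]
        rw [e1, e2]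
        linear_combination hP - hfv
      exact Set.eq_of_subset_of_ncard_le hsubset
        (Set.ncard_image_of_injective _ hinj).ge (Set.toFinite _)
  · -- (ii) the count
    have hrep : {g : (K × K) → (K × K) |
          ∃ u v : K, f (u + κ u) = -(v + κ v) ∧ g = ς u v (u + κ u)}
        = (fun uv : K × K => ς uv.1 uv.2 (uv.1 + κ uv.1)) ''
          {uv : K × K | f (uv.1 + κ uv.1) = -(uv.2 + κ uv.2)} := by
      ext g
      constructor
      · rintro ⟨u, v, hv, rfl⟩; exact ⟨(u, v), hv, rfl⟩
      · rintro ⟨⟨u, v⟩, hv, rfl⟩; exact ⟨u, v, hv, rfl⟩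
    have hinj : Function.Injective (fun uv : K × K => ς uv.1 uv.2 (uv.1 + κ uv.1)) := by
      rintro ⟨u, v⟩ ⟨u', v'⟩ h
      simp only at h
      have h0 := congrFun h ((0 : K), (0 : K))
      rw [hς, hς, hs0r, hs0r] at h0
      simp only [Prod.mk.injEq] at h0
      obtain ⟨h1, h2⟩ := h0
      exact Prod.ext (by linear_combination h1) (by linear_combination -h2)
    have hfib : ∀ u : K, {v : K | f (u + κ u) = -(v + κ v)}.ncard = q := by
      intro u
      have hset : {v : K | f (u + κ u) = -(v + κ v)}
          = Neg.neg '' {y : K | y + κ y = f (u + κ u)} := by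
        ext v
        simp only [Set.mem_setOf_eq, Set.mem_image]
        constructor
        · intro h
          exact ⟨-v, by rw [hkneg]; linear_combination -h, by ring⟩
        · rintro ⟨y, hy, rfl⟩
          rw [hkneg]
          linear_combination -hy
      rw [hset, Set.ncard_image_of_injective _ neg_injective, hcount u]
    have hc := stmt19_prodcount (fun u v => f (u + κ u) = -(v + κ v)) q hfib
    rw [hrep, Set.ncard_image_of_injective _ hinj]
    rw [show {uv : K × K | f (uv.1 + κ uv.1) = -(uv.2 + κ uv.2)}
        = {P : K × K | (fun u v => f (u + κ u) = -(v + κ v)) P.1 P.2} from rfl, hc, hcard]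
    ring
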